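/- arXiv:1903.05173 — 4 statements merged into one kernel-verified Lean document; each statement's English description precedes it below -/
import Mathlib

section
/- For natural numbers n, m and a real number r > −1, ∫₀¹∫₀¹ tⁿ sᵐ |t−s|ʳ ds dt = Γ(m+1)Γ(r+1)/((n+m+r+2)Γ(m+r+2)) + Γ(n+1)Γ(r+1)/((n+m+r+2)Γ(n+r+2)). -/
open Filter Real intervalIntegral

open MeasureTheory
open Filter Real intervalIntegral MeasureTheory

lemma betaR (a b : ℝ) (ha : -1 < a) (hb : -1 < b) :
    ∫ x in (0:ℝ)..1, x ^ a * (1 - x) ^ b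
      = Real.Gamma (a + 1) * Real.Gamma (b + 1) / Real.Gamma (a + b + 2) := by
  have ha1 : (0:ℝ) < a + 1 := by linarith
  have hb1 : (0:ℝ) < b + 1 := by linarith
  have h := Complex.Gamma_mul_Gamma_eq_betaIntegral
    (s := (a:ℂ) + 1) (t := (b:ℂ) + 1) (by simpa using ha1) (by simpa using hb1)
  have hbeta : Complex.betaIntegral ((a:ℂ) + 1) ((b:ℂ) + 1)
      = ((∫ x in (0:ℝ)..1, x ^ a * (1 - x) ^ b : ℝ) : ℂ) := by
    rw [Complex.betaIntegral, ← intervalIntegral.integral_ofReal]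
    apply intervalIntegral.integral_congr
    intro x hx
    rw [Set.uIcc_of_le (by norm_num : (0:ℝ) ≤ 1)] at hx
    obtain ⟨hx0, hx1⟩ := hx
    push_cast
    rw [Complex.ofReal_cpow hx0, Complex.ofReal_cpow (by linarith)]
    push_cast
    ring_nf
  rw [hbeta] at h
  have e1 : Complex.Gamma ((a:ℂ) + 1) = ((Real.Gamma (a+1) : ℝ) : ℂ) := by
    rw [← Complex.Gamma_ofReal]; push_cast; ring_nf
  have e2 : Complex.Gamma ((b:ℂ) + 1) = ((Real.Gamma (b+1) : ℝ) : ℂ) := by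
    rw [← Complex.Gamma_ofReal]; push_cast; ring_nf
  have e3 : Complex.Gamma ((a:ℂ) + 1 + ((b:ℂ) + 1)) = ((Real.Gamma (a+b+2) : ℝ) : ℂ) := by
    rw [← Complex.Gamma_ofReal]; push_cast; ring_nf
  rw [e1, e2, e3, ← Complex.ofReal_mul, ← Complex.ofReal_mul, Complex.ofReal_inj] at h
  have hg : Real.Gamma (a + b + 2) ≠ 0 :=
    (Real.Gamma_pos_of_pos (by linarith)).ne'
  field_simp [h]
  rw [h]; ring


lemma betaScaled (m : ℕ) (b : ℝ) (hb : -1 < b) {t : ℝ} (ht : 0 ≤ t) :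
    ∫ s in (0:ℝ)..t, s ^ m * (t - s) ^ b
      = t ^ ((m:ℝ) + b + 1) * ∫ x in (0:ℝ)..1, x ^ (m:ℝ) * (1 - x) ^ b := by
  have hm : (0:ℝ) ≤ m := Nat.cast_nonneg m
  rcases eq_or_lt_of_le ht with h0 | h0
  · rw [← h0, intervalIntegral.integral_same,
      Real.zero_rpow (by intro h; linarith), zero_mul]
  · have key := intervalIntegral.mul_integral_comp_mul_left
      (a := (0:ℝ)) (b := (1:ℝ)) (c := t) (f := fun s => s ^ m * (t - s) ^ b)
    rw [mul_zero, mul_one] at key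
    rw [← key]
    have h1 : ∫ x in (0:ℝ)..1, (t * x) ^ m * (t - t * x) ^ b
        = ∫ x in (0:ℝ)..1, (t ^ m * t ^ b) * (x ^ (m:ℝ) * (1 - x) ^ b) := by
      apply intervalIntegral.integral_congr
      intro x hx
      rw [Set.uIcc_of_le (by norm_num : (0:ℝ) ≤ 1)] at hx
      obtain ⟨hx0, hx1⟩ := hx
      dsimp only
      have h2 : t - t * x = t * (1 - x) := by ring
      rw [h2, Real.mul_rpow ht (by linarith), mul_pow, ← Real.rpow_natCast x m]
      ring
    rw [h1, intervalIntegral.integral_const_mul, ← mul_assoc]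
    congr 1
    rw [Real.rpow_add h0, Real.rpow_add h0, Real.rpow_one, Real.rpow_natCast]
    ring


lemma II1 (m : ℕ) {r : ℝ} (hr : -1 < r) (t c d : ℝ) :
    IntervalIntegrable (fun s => s ^ m * (s - t) ^ r) volume c d := by
  have h := (intervalIntegrable_rpow' (a := c - t) (b := d - t) hr).comp_sub_right t
  simp only [sub_add_cancel] at h
  exact h.continuousOn_mul (by fun_prop)

lemma II2 (m : ℕ) {r : ℝ} (hr : -1 < r) (t c d : ℝ) :
    IntervalIntegrable (fun s => s ^ m * (t - s) ^ r) volume c d := by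
  have h := (intervalIntegrable_rpow' (a := t - d) (b := t - c) hr).comp_sub_left t
  simp only [sub_sub_cancel] at h
  exact h.symm.continuousOn_mul (by fun_prop)


lemma Fcongr (n m : ℕ) {r : ℝ} (hr : -1 < r) :
    Set.EqOn (fun t : ℝ => t ^ n * ∫ s in (0:ℝ)..t, s ^ m * (t - s) ^ r)
      (fun t : ℝ => (∫ x in (0:ℝ)..1, x ^ (m:ℝ) * (1 - x) ^ r) * t ^ ((n:ℝ) + m + r + 1))
      (Set.uIcc 0 1) := by
  have hm : (0:ℝ) ≤ m := Nat.cast_nonneg m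
  have hn : (0:ℝ) ≤ n := Nat.cast_nonneg n
  intro t ht
  rw [Set.uIcc_of_le (by norm_num : (0:ℝ) ≤ 1)] at ht
  obtain ⟨ht0, ht1⟩ := ht
  dsimp only
  rw [betaScaled m r hr ht0]
  rcases eq_or_lt_of_le ht0 with h0 | h0
  · rw [← h0, Real.zero_rpow (by intro h; linarith), Real.zero_rpow (by intro h; linarith)]
    ring
  · rw [← Real.rpow_natCast t n,
      show (n:ℝ) + m + r + 1 = (n:ℝ) + ((m:ℝ) + r + 1) by ring,
      Real.rpow_add h0 (n:ℝ) ((m:ℝ) + r + 1)]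
    ring

lemma Fval (n m : ℕ) {r : ℝ} (hr : -1 < r) :
    ∫ t in (0:ℝ)..1, t ^ n * ∫ s in (0:ℝ)..t, s ^ m * (t - s) ^ r
      = Real.Gamma (m + 1) * Real.Gamma (r + 1)
          / (((n : ℝ) + m + r + 2) * Real.Gamma ((m : ℝ) + r + 2)) := by
  have hm : (0:ℝ) ≤ m := Nat.cast_nonneg m
  have hn : (0:ℝ) ≤ n := Nat.cast_nonneg n
  rw [intervalIntegral.integral_congr (Fcongr n m hr), intervalIntegral.integral_const_mul,
    integral_rpow (Or.inl (by linarith)), betaR (m:ℝ) r (by linarith) hr]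
  rw [Real.one_rpow, Real.zero_rpow (by intro h; linarith), sub_zero,
    show (n:ℝ) + m + r + 1 + 1 = (n:ℝ) + m + r + 2 by ring,
    div_mul_div_comm, mul_one, mul_comm (Real.Gamma ((m:ℝ) + r + 2))]
lemma swapT (n m : ℕ) {r : ℝ} (hr : -1 < r) :
    IntervalIntegrable (fun t => t ^ n * ∫ s in t..(1:ℝ), s ^ m * (s - t) ^ r) volume 0 1 ∧
    ∫ t in (0:ℝ)..1, t ^ n * ∫ s in t..(1:ℝ), s ^ m * (s - t) ^ r
      = ∫ s in (0:ℝ)..1, s ^ m * ∫ t in (0:ℝ)..s, t ^ n * (s - t) ^ r := by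
  set μ := volume.restrict (Set.Ioc (0:ℝ) 1) with hμ
  set g : ℝ → ℝ → ℝ := fun t s => if t < s then t ^ n * s ^ m * (s - t) ^ r else 0 with hg
  -- measurability
  have hgm : AEStronglyMeasurable (Function.uncurry g) (μ.prod μ) := by
    apply Measurable.aestronglyMeasurable
    apply Measurable.ite (measurableSet_lt measurable_fst measurable_snd)
    · have hrm : Measurable (fun x : ℝ => x ^ r) :=
        measurable_of_continuousOn_compl_singleton 0
          (ContinuousOn.rpow_const continuousOn_id (fun x hx => Or.inl hx))
      exact ((measurable_fst.pow_const n).mul (measurable_snd.pow_const m)).mul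
        (hrm.comp (measurable_snd.sub measurable_fst))
    · exact measurable_const
  -- integrability in s for fixed t
  have key_int : ∀ t ∈ Set.Ioc (0:ℝ) 1, IntegrableOn (g t) (Set.Ioc 0 1) := by
    intro t ht
    rw [← Set.Ioc_union_Ioc_eq_Ioc (le_of_lt ht.1) ht.2]
    apply IntegrableOn.union
    · apply integrableOn_zero.congr_fun _ measurableSet_Ioc
      intro s hs
      exact (if_neg (not_lt.mpr hs.2)).symm
    · have h2 : IntegrableOn (fun s => s ^ m * (s - t) ^ r) (Set.Ioc t 1) :=
        (intervalIntegrable_iff_integrableOn_Ioc_of_le ht.2).mp (II1 m hr t t 1)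
      apply IntegrableOn.congr_fun (h2.const_mul (t ^ n)) _ measurableSet_Ioc
      intro s hs
      rw [hg]; dsimp only
      rw [if_pos hs.1]; ring
  -- value of inner s-integral
  have val_t : ∀ t ∈ Set.Ioc (0:ℝ) 1,
      (∫ s, g t s ∂μ) = t ^ n * ∫ s in t..(1:ℝ), s ^ m * (s - t) ^ r := by
    intro t ht
    have hsplit : Set.Ioc (0:ℝ) 1 = Set.Ioc 0 t ∪ Set.Ioc t 1 :=
      (Set.Ioc_union_Ioc_eq_Ioc (le_of_lt ht.1) ht.2).symm
    rw [hμ, hsplit, setIntegral_union (Set.Ioc_disjoint_Ioc_of_le le_rfl) measurableSet_Ioc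
      ((key_int t ht).mono_set (by rw [hsplit]; exact Set.subset_union_left))
      ((key_int t ht).mono_set (by rw [hsplit]; exact Set.subset_union_right))]
    have e1 : (∫ s in Set.Ioc (0:ℝ) t, g t s) = 0 := by
      rw [setIntegral_congr_fun measurableSet_Ioc
        (fun s hs => if_neg (not_lt.mpr hs.2)), MeasureTheory.integral_zero ..]
    have e2 : (∫ s in Set.Ioc t 1, g t s)
        = ∫ s in Set.Ioc t 1, t ^ n * (s ^ m * (s - t) ^ r) := by
      apply setIntegral_congr_fun measurableSet_Ioc
      intro s hs
      rw [hg]; dsimp only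
      rw [if_pos hs.1]; ring
    rw [e1, e2, zero_add, MeasureTheory.integral_const_mul, ← intervalIntegral.integral_of_le ht.2]
  -- value of inner t-integral
  have val_s : ∀ s ∈ Set.Ioc (0:ℝ) 1,
      (∫ t, g t s ∂μ) = s ^ m * ∫ t in (0:ℝ)..s, t ^ n * (s - t) ^ r := by
    intro s hs
    have hsplit : Set.Ioc (0:ℝ) 1 = Set.Ioc 0 s ∪ Set.Ioc s 1 :=
      (Set.Ioc_union_Ioc_eq_Ioc (le_of_lt hs.1) hs.2).symm
    have hae : ∀ᵐ t : ℝ ∂volume, t ≠ s := by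
      rw [ae_iff]
      convert Real.volume_singleton (a := s) using 2
      ext t; simp
    have hInt1 : IntegrableOn (fun t => g t s) (Set.Ioc 0 s) := by
      have h2 : IntegrableOn (fun t => s ^ m * (t ^ n * (s - t) ^ r)) (Set.Ioc 0 s) :=
        ((intervalIntegrable_iff_integrableOn_Ioc_of_le (le_of_lt hs.1)).mp
          (II2 n hr s 0 s)).const_mul (s ^ m)
      apply h2.congr_fun_ae
      rw [EventuallyEq, ae_restrict_iff' measurableSet_Ioc]
      filter_upwards [hae] with t hts htmem
      rw [hg]; dsimp only
      rw [if_pos (lt_of_le_of_ne htmem.2 hts)]; ring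
    have hInt2 : IntegrableOn (fun t => g t s) (Set.Ioc s 1) := by
      apply integrableOn_zero.congr_fun _ measurableSet_Ioc
      intro t htm
      exact (if_neg (by push_neg; exact le_of_lt htm.1)).symm
    rw [hμ, hsplit, setIntegral_union (Set.Ioc_disjoint_Ioc_of_le le_rfl) measurableSet_Ioc hInt1 hInt2]
    have e2 : (∫ t in Set.Ioc s 1, g t s) = 0 := by
      rw [setIntegral_congr_fun measurableSet_Ioc
        (fun t htm => if_neg (by push_neg; exact le_of_lt htm.1)), MeasureTheory.integral_zero ..]
    have e1 : (∫ t in Set.Ioc (0:ℝ) s, g t s)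
        = ∫ t in Set.Ioc (0:ℝ) s, s ^ m * (t ^ n * (s - t) ^ r) := by
      apply setIntegral_congr_ae measurableSet_Ioc
      filter_upwards [hae] with t hts htmem
      rw [hg]; dsimp only
      rw [if_pos (lt_of_le_of_ne htmem.2 hts)]; ring
    rw [e1, e2, add_zero, MeasureTheory.integral_const_mul, ← intervalIntegral.integral_of_le (le_of_lt hs.1)]
  have hr1 : (0:ℝ) < r + 1 := by linarith
  have hInt : Integrable (Function.uncurry g) (μ.prod μ) := by
    rw [integrable_prod_iff hgm]
    constructor
    · rw [hμ, ae_restrict_iff' measurableSet_Ioc]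
      exact ae_of_all _ key_int
    · apply Integrable.mono' (integrable_const (1 / (r + 1))) (hgm.norm.integral_prod_right')
      rw [hμ, ae_restrict_iff' measurableSet_Ioc]
      apply ae_of_all
      intro t ht
      set h : ℝ → ℝ := fun s => if t < s then (s - t) ^ r else 0 with hh
      have hIH2 : IntegrableOn h (Set.Ioc t 1) := by
        have h2 : IntegrableOn (fun s => s ^ (0:ℕ) * (s - t) ^ r) (Set.Ioc t 1) :=
          (intervalIntegrable_iff_integrableOn_Ioc_of_le ht.2).mp (II1 0 hr t t 1)
        apply h2.congr_fun _ measurableSet_Ioc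
        intro s hs
        rw [hh]; dsimp only
        rw [if_pos hs.1, pow_zero, one_mul]
      have hIH1 : IntegrableOn h (Set.Ioc 0 t) := by
        apply integrableOn_zero.congr_fun _ measurableSet_Ioc
        intro s hs; exact (if_neg (not_lt.mpr hs.2)).symm
      have hIntH : IntegrableOn h (Set.Ioc 0 1) := by
        rw [← Set.Ioc_union_Ioc_eq_Ioc (le_of_lt ht.1) ht.2]
        exact hIH1.union hIH2
      have hle : (∫ s, ‖Function.uncurry g (t, s)‖ ∂μ) ≤ ∫ s in Set.Ioc (0:ℝ) 1, h s := by
        rw [hμ]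
        apply integral_mono_of_nonneg (ae_of_all _ fun s => norm_nonneg _) hIntH
        rw [Filter.EventuallyLE, ae_restrict_iff' measurableSet_Ioc]
        apply ae_of_all
        intro s hsm
        rw [hh, hg]; dsimp only [Function.uncurry]
        by_cases hts : t < s
        · rw [if_pos hts, if_pos hts, Real.norm_of_nonneg]
          · have h1 : t ^ n ≤ 1 := pow_le_one₀ (le_of_lt ht.1) ht.2
            have h2 : s ^ m ≤ 1 := pow_le_one₀ (le_of_lt hsm.1) hsm.2
            have h3 : (0:ℝ) ≤ (s - t) ^ r := Real.rpow_nonneg (by linarith) r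
            have h4 : t ^ n * s ^ m ≤ 1 :=
              mul_le_one₀ h1 (pow_nonneg (le_of_lt hsm.1) m) h2
            calc t ^ n * s ^ m * (s - t) ^ r
                ≤ 1 * (s - t) ^ r := mul_le_mul_of_nonneg_right h4 h3
              _ = (s - t) ^ r := one_mul _
          · have h3 : (0:ℝ) ≤ (s - t) ^ r := Real.rpow_nonneg (by linarith) r
            have := pow_nonneg (le_of_lt ht.1) n
            have := pow_nonneg (le_of_lt hsm.1) m
            positivity
        · rw [if_neg hts, if_neg hts, norm_zero]
      have hval : (∫ s in Set.Ioc (0:ℝ) 1, h s) ≤ 1 / (r + 1) := by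
        rw [← Set.Ioc_union_Ioc_eq_Ioc (le_of_lt ht.1) ht.2,
          setIntegral_union (Set.Ioc_disjoint_Ioc_of_le le_rfl) measurableSet_Ioc hIH1 hIH2]
        have e0 : (∫ s in Set.Ioc (0:ℝ) t, h s) = 0 := by
          rw [setIntegral_congr_fun measurableSet_Ioc
            (fun s hs => if_neg (not_lt.mpr hs.2)), MeasureTheory.integral_zero ..]
        have e3 : (∫ s in Set.Ioc t 1, h s) = ∫ s in t..(1:ℝ), (s - t) ^ r := by
          rw [setIntegral_congr_fun measurableSet_Ioc (fun s hs => if_pos hs.1),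
            ← intervalIntegral.integral_of_le ht.2]
        have e4 : (∫ s in t..(1:ℝ), (s - t) ^ r) = (1 - t) ^ (r + 1) / (r + 1) := by
          have hcs := intervalIntegral.integral_comp_sub_right
            (a := t) (b := 1) (fun u => u ^ r) t
          rw [hcs, sub_self, integral_rpow (Or.inl hr),
            Real.zero_rpow (by intro hc; linarith), sub_zero]
        rw [e0, e3, e4, zero_add]
        have hle1 : (1 - t) ^ (r + 1) ≤ 1 :=
          Real.rpow_le_one (by linarith [ht.2]) (by linarith [ht.1]) (le_of_lt hr1)
        gcongr
      calc ‖∫ s, ‖Function.uncurry g (t, s)‖ ∂μ‖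
          = ∫ s, ‖Function.uncurry g (t, s)‖ ∂μ :=
            Real.norm_of_nonneg (integral_nonneg fun s => norm_nonneg _)
        _ ≤ 1 / (r + 1) := le_trans hle hval
  constructor
  · rw [intervalIntegrable_iff_integrableOn_Ioc_of_le (by norm_num : (0:ℝ) ≤ 1)]
    have hB := hInt.integral_prod_left
    apply hB.congr
    rw [hμ, Filter.EventuallyEq, ae_restrict_iff' measurableSet_Ioc]
    exact ae_of_all _ fun t ht => val_t t ht
  have L : (∫ t in Set.Ioc (0:ℝ) 1, (t ^ n * ∫ s in t..(1:ℝ), s ^ m * (s - t) ^ r))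
      = ∫ t, (∫ s, g t s ∂μ) ∂μ :=
    (setIntegral_congr_fun measurableSet_Ioc (fun t ht => val_t t ht)).symm
  have R : (∫ s in Set.Ioc (0:ℝ) 1, (s ^ m * ∫ t in (0:ℝ)..s, t ^ n * (s - t) ^ r))
      = ∫ s, (∫ t, g t s ∂μ) ∂μ :=
    (setIntegral_congr_fun measurableSet_Ioc (fun s hs => val_s s hs)).symm
  rw [intervalIntegral.integral_of_le (by norm_num : (0:ℝ) ≤ 1),
    intervalIntegral.integral_of_le (by norm_num : (0:ℝ) ≤ 1), L, R]
  exact integral_integral_swap hInt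

/-- For natural numbers `n, m` and real `r > −1`,
`∫₀¹∫₀¹ tⁿ sᵐ |t−s|ʳ ds dt
  = Γ(m+1)Γ(r+1)/((n+m+r+2)Γ(m+r+2)) + Γ(n+1)Γ(r+1)/((n+m+r+2)Γ(n+r+2))`. -/
theorem double_integral_abs_pow (n m : ℕ) (r : ℝ) (hr : -1 < r) :
    ∫ t in (0:ℝ)..1, ∫ s in (0:ℝ)..1, t ^ n * s ^ m * |t - s| ^ r
      = Real.Gamma (m + 1) * Real.Gamma (r + 1)
          / (((n : ℝ) + m + r + 2) * Real.Gamma ((m : ℝ) + r + 2))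
        + Real.Gamma (n + 1) * Real.Gamma (r + 1)
          / (((n : ℝ) + m + r + 2) * Real.Gamma ((n : ℝ) + r + 2)) := by
  have hm : (0:ℝ) ≤ m := Nat.cast_nonneg m
  have hn : (0:ℝ) ≤ n := Nat.cast_nonneg n
  have h01 : (0:ℝ) ≤ 1 := by norm_num
  have inner : Set.EqOn
      (fun t : ℝ => ∫ s in (0:ℝ)..1, t ^ n * s ^ m * |t - s| ^ r)
      (fun t : ℝ => (t ^ n * ∫ s in (0:ℝ)..t, s ^ m * (t - s) ^ r)
        + (t ^ n * ∫ s in t..(1:ℝ), s ^ m * (s - t) ^ r)) (Set.uIcc 0 1) := by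
    intro t ht
    rw [Set.uIcc_of_le h01] at ht
    obtain ⟨ht0, ht1⟩ := ht
    dsimp only
    have hi1 : IntervalIntegrable (fun s => t ^ n * s ^ m * |t - s| ^ r) volume 0 t := by
      apply ((II2 m hr t 0 t).const_mul (t ^ n)).congr_ae
      rw [Filter.EventuallyEq, ae_restrict_iff' measurableSet_uIoc]
      apply MeasureTheory.ae_of_all
      intro s hs
      rw [Set.uIoc_of_le ht0] at hs
      rw [abs_of_nonneg (by linarith [hs.2] : (0:ℝ) ≤ t - s)]
      ring
    have hi2 : IntervalIntegrable (fun s => t ^ n * s ^ m * |t - s| ^ r) volume t 1 := by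
      apply ((II1 m hr t t 1).const_mul (t ^ n)).congr_ae
      rw [Filter.EventuallyEq, ae_restrict_iff' measurableSet_uIoc]
      apply MeasureTheory.ae_of_all
      intro s hs
      rw [Set.uIoc_of_le ht1] at hs
      rw [abs_of_nonpos (by linarith [hs.1] : t - s ≤ 0), neg_sub]
      ring
    have e1 : (∫ s in (0:ℝ)..t, t ^ n * s ^ m * |t - s| ^ r)
        = t ^ n * ∫ s in (0:ℝ)..t, s ^ m * (t - s) ^ r := by
      rw [← intervalIntegral.integral_const_mul]
      apply intervalIntegral.integral_congr
      intro s hs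
      rw [Set.uIcc_of_le ht0] at hs
      dsimp only
      rw [abs_of_nonneg (by linarith [hs.2] : (0:ℝ) ≤ t - s)]
      ring
    have e2 : (∫ s in t..(1:ℝ), t ^ n * s ^ m * |t - s| ^ r)
        = t ^ n * ∫ s in t..(1:ℝ), s ^ m * (s - t) ^ r := by
      rw [← intervalIntegral.integral_const_mul]
      apply intervalIntegral.integral_congr
      intro s hs
      rw [Set.uIcc_of_le ht1] at hs
      dsimp only
      rw [abs_of_nonpos (by linarith [hs.1] : t - s ≤ 0), neg_sub]
      ring
    rw [← e1, ← e2, intervalIntegral.integral_add_adjacent_intervals hi1 hi2]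
  rw [intervalIntegral.integral_congr inner]
  have hA : IntervalIntegrable
      (fun t : ℝ => t ^ n * ∫ s in (0:ℝ)..t, s ^ m * (t - s) ^ r) volume 0 1 := by
    have hc : Continuous (fun t : ℝ =>
        (∫ x in (0:ℝ)..1, x ^ (m:ℝ) * (1 - x) ^ r) * t ^ ((n:ℝ) + m + r + 1)) :=
      continuous_const.mul (Real.continuous_rpow_const (by linarith))
    apply (hc.intervalIntegrable 0 1).congr_ae
    rw [Filter.EventuallyEq, ae_restrict_iff' measurableSet_uIoc]
    apply MeasureTheory.ae_of_all
    intro t ht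
    exact (Fcongr n m hr (Set.uIoc_subset_uIcc ht)).symm
  have hB := (swapT n m hr).1
  rw [intervalIntegral.integral_add hA hB, Fval n m hr, (swapT n m hr).2, Fval m n hr]
  ring
end

section
/- For H ∈ (1/2, 1), the limit as n → ∞ of n^(2H) ∫₀¹∫₀¹ xⁿ yⁿ |x−y|^(2H−2) dy dx equals Γ(2H−1). -/
open Filter Real intervalIntegral MeasureTheory Set

lemma aux_beta {b : ℝ} (hb : 0 < b) (n : ℕ) :
    ∫ t in (0:ℝ)..1, t ^ n * (1 - t) ^ (b - 1)
      = Real.Gamma (n + 1) * Real.Gamma b / Real.Gamma (n + 1 + b) := by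
  have key := Complex.Gamma_mul_Gamma_eq_betaIntegral
    (s := (n : ℂ) + 1) (t := (b : ℂ)) (by simp [Nat.cast_nonneg]; positivity) (by simpa using hb)
  have hbeta : Complex.betaIntegral ((n : ℂ) + 1) (b : ℂ)
      = ((∫ t in (0:ℝ)..1, t ^ n * (1 - t) ^ (b - 1) : ℝ) : ℂ) := by
    rw [Complex.betaIntegral, ← intervalIntegral.integral_ofReal]
    apply intervalIntegral.integral_congr
    intro x hx
    rw [uIcc_of_le (by norm_num)] at hx
    have h1x : (0:ℝ) ≤ 1 - x := by linarith [hx.2]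
    have e1 : ((n : ℂ) + 1 - 1) = ((n : ℕ) : ℂ) := by ring
    have e2 : ((b : ℂ) - 1) = ((b - 1 : ℝ) : ℂ) := by push_cast; ring
    simp only [Complex.ofReal_mul, Complex.ofReal_pow]
    rw [Complex.ofReal_cpow h1x]
    simp only [e1, e2, Complex.cpow_natCast]
    push_cast
    ring
  rw [hbeta] at key
  have hg1 : Complex.Gamma ((n : ℂ) + 1) = (Real.Gamma (n + 1) : ℂ) := by
    rw [show ((n : ℂ) + 1) = ((n + 1 : ℝ) : ℂ) by push_cast; ring, Complex.Gamma_ofReal]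
  have hg2 : Complex.Gamma ((n : ℂ) + 1 + b) = (Real.Gamma (n + 1 + b) : ℂ) := by
    rw [show ((n : ℂ) + 1 + b) = ((n + 1 + b : ℝ) : ℂ) by push_cast; ring, Complex.Gamma_ofReal]
  rw [hg1, Complex.Gamma_ofReal, hg2, ← Complex.ofReal_mul, ← Complex.ofReal_mul] at key
  have := Complex.ofReal_inj.mp key
  have hpos : 0 < Real.Gamma (n + 1 + b) := Real.Gamma_pos_of_pos (by positivity)
  field_simp [this]
  rw [this]; ring

lemma aux_prod {s : ℝ} (hs : 0 < s) (n : ℕ) :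
    ∏ j ∈ Finset.range (n + 1), (s + j) = Real.Gamma (s + n + 1) / Real.Gamma s := by
  have hgs : Real.Gamma s ≠ 0 := (Real.Gamma_pos_of_pos hs).ne'
  induction n with
  | zero =>
      simp only [Finset.prod_range_one, Nat.cast_zero, add_zero, Nat.zero_add, zero_add]
      rw [Real.Gamma_add_one hs.ne', mul_div_assoc, div_self hgs, mul_one]
  | succ n ih =>
      rw [Finset.prod_range_succ, ih]
      have h1 : s + (n + 1 : ℕ) + 1 = (s + n + 1) + 1 := by push_cast; ring
      have h2 : Real.Gamma ((s + n + 1) + 1) = (s + n + 1) * Real.Gamma (s + n + 1) :=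
        Real.Gamma_add_one (by positivity)
      rw [h1, h2]
      push_cast
      field_simp
      ring

lemma aux_lim {s : ℝ} (hs : 0 < s) :
    Tendsto (fun n : ℕ => (n : ℝ) ^ s * n.factorial / Real.Gamma (s + n + 1))
      atTop (nhds 1) := by
  have hgs : Real.Gamma s ≠ 0 := (Real.Gamma_pos_of_pos hs).ne'
  have h := (Real.GammaSeq_tendsto_Gamma s).div_const (Real.Gamma s)
  rw [div_self hgs] at h
  apply h.congr
  intro n
  have hg : Real.Gamma (s + n + 1) ≠ 0 := (Real.Gamma_pos_of_pos (by positivity)).ne'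
  rw [Real.GammaSeq, aux_prod hs n]
  field_simp

lemma aux_ratio {H : ℝ} (hH : 0 < H) :
    Tendsto (fun n : ℕ => 2 * (n:ℝ) / (2 * n + 2 * H)) atTop (nhds 1) := by
  have hden : Tendsto (fun n : ℕ => 2 * (n:ℝ) + 2 * H) atTop atTop :=
    tendsto_atTop_add_const_right _ _
      (Tendsto.const_mul_atTop (by norm_num) tendsto_natCast_atTop_atTop)
  have h0 : Tendsto (fun n : ℕ => 2 * H / (2 * (n:ℝ) + 2 * H)) atTop (nhds 0) :=
    Tendsto.div_atTop tendsto_const_nhds hden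
  have h1 : Tendsto (fun n : ℕ => 1 - 2 * H / (2 * (n:ℝ) + 2 * H)) atTop (nhds (1 - 0)) :=
    tendsto_const_nhds.sub h0
  rw [sub_zero] at h1
  apply h1.congr
  intro n
  have hne : 2 * (n:ℝ) + 2 * H ≠ 0 := by positivity
  field_simp
  ring

lemma aux_ii {a : ℝ} (ha : -1 < a) (n : ℕ) (x : ℝ) :
    IntervalIntegrable (fun y => y ^ n * (x - y) ^ a) volume 0 x := by
  have h1 : IntervalIntegrable (fun y : ℝ => (x - y) ^ a) volume 0 x := by
    have := ((intervalIntegrable_rpow' (a := 0) (b := x) ha).comp_sub_left x).symm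
    simpa using this
  exact h1.continuousOn_mul (by fun_prop)

lemma aux_ii2 {a : ℝ} (ha : -1 < a) (n : ℕ) (x : ℝ) :
    IntervalIntegrable (fun y => y ^ n * (y - x) ^ a) volume x 1 := by
  have h1 : IntervalIntegrable (fun y : ℝ => (y - x) ^ a) volume x 1 := by
    have := (intervalIntegrable_rpow' (a := 0) (b := 1 - x) ha).comp_sub_right x
    have e1 : (0:ℝ) + x = x := by ring
    have e2 : (1:ℝ) - x + x = 1 := by ring
    rwa [e1, e2] at this
  exact h1.continuousOn_mul (by fun_prop)

lemma aux_sub {a : ℝ} (n : ℕ) {x : ℝ} (hx : 0 < x) :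
    ∫ y in (0:ℝ)..x, y ^ n * (x - y) ^ a
      = x ^ (n+1) * x ^ a * ∫ t in (0:ℝ)..1, t ^ n * (1 - t) ^ a := by
  have h := intervalIntegral.integral_comp_mul_right
    (fun y => y ^ n * (x - y) ^ a) (ne_of_gt hx) (a := 0) (b := 1)
  simp only [zero_mul, one_mul] at h
  have h2 : ∫ y in (0:ℝ)..x, y ^ n * (x - y) ^ a
      = x * ∫ t in (0:ℝ)..1, (t * x) ^ n * (x - t * x) ^ a := by
    rw [h, smul_eq_mul, ← mul_assoc, mul_inv_cancel₀ (ne_of_gt hx), one_mul]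
  rw [h2, ← intervalIntegral.integral_const_mul, ← intervalIntegral.integral_const_mul]
  apply intervalIntegral.integral_congr
  intro t ht
  rw [uIcc_of_le (by norm_num)] at ht
  have h1t : 0 ≤ 1 - t := by linarith [ht.2]
  have h3 : x - t * x = x * (1 - t) := by ring
  simp only []
  rw [h3, Real.mul_rpow hx.le h1t, mul_pow]
  ring

lemma aux_val {a : ℝ} (ha : -1 < a) (ha0 : a < 0) (n : ℕ) :
    ∫ x in (0:ℝ)..1, ∫ y in (0:ℝ)..1, x ^ n * y ^ n * |x - y| ^ a
      = 2 * (∫ t in (0:ℝ)..1, t ^ n * (1 - t) ^ a) / (2 * n + 2 + a) := by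
  set B := ∫ t in (0:ℝ)..1, t ^ n * (1 - t) ^ a with hB
  set F : ℝ × ℝ → ℝ := fun p => if p.2 < p.1 then p.1 ^ n * p.2 ^ n * (p.1 - p.2) ^ a else 0
    with hF
  have hFm : Measurable F := by
    apply Measurable.ite (measurableSet_lt measurable_snd measurable_fst) _ measurable_const
    fun_prop
  -- slice integrability, first variable fixed
  have hslice1 : ∀ x ∈ Ioc (0:ℝ) 1, Integrable (fun y => F (x, y))
      (volume.restrict (Ioc (0:ℝ) 1)) := by
    intro x hx
    have hio : (fun y => F (x, y)) = (Iio x).indicator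
        (fun y => x ^ n * (y ^ n * (x - y) ^ a)) := by
      funext y
      simp only [hF, Set.indicator_apply, Set.mem_Iio]
      split <;> ring
    rw [hio, integrable_indicator_iff measurableSet_Iio, IntegrableOn,
      Measure.restrict_restrict measurableSet_Iio]
    have hset : Iio x ∩ Ioc 0 1 = Ioo 0 x := by
      ext y
      simp only [mem_inter_iff, mem_Iio, mem_Ioc, mem_Ioo]
      constructor
      · rintro ⟨h1, h2, h3⟩; exact ⟨h2, h1⟩
      · rintro ⟨h1, h2⟩; exact ⟨h2, h1, le_trans h2.le hx.2⟩
    rw [hset]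
    exact (((aux_ii ha n x).const_mul (x ^ n)).1.mono_set Ioo_subset_Ioc_self :
      IntegrableOn _ (Ioo 0 x) volume)
  -- slice integrability, second variable fixed
  have hslice2 : ∀ x ∈ Ioc (0:ℝ) 1, Integrable (fun y => F (y, x))
      (volume.restrict (Ioc (0:ℝ) 1)) := by
    intro x hx
    have hio : (fun y => F (y, x)) = (Ioi x).indicator
        (fun y => x ^ n * (y ^ n * (y - x) ^ a)) := by
      funext y
      simp only [hF, Set.indicator_apply, Set.mem_Ioi]
      split <;> ring
    rw [hio, integrable_indicator_iff measurableSet_Ioi, IntegrableOn,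
      Measure.restrict_restrict measurableSet_Ioi]
    have hset : Ioi x ∩ Ioc 0 1 = Ioc x 1 := by
      ext y
      simp only [mem_inter_iff, mem_Ioi, mem_Ioc]
      constructor
      · rintro ⟨h1, h2, h3⟩; exact ⟨h1, h3⟩
      · rintro ⟨h1, h2⟩; exact ⟨h1, lt_trans hx.1 h1, h2⟩
    rw [hset]
    exact ((aux_ii2 ha n x).const_mul (x ^ n)).1
  -- slice value
  have hval1 : ∀ x ∈ Ioc (0:ℝ) 1, (∫ y, F (x, y) ∂(volume.restrict (Ioc (0:ℝ) 1)))
      = x ^ n * (x ^ (n+1) * x ^ a * B) := by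
    intro x hx
    have hio : (fun y => F (x, y)) = (Iio x).indicator
        (fun y => x ^ n * (y ^ n * (x - y) ^ a)) := by
      funext y
      simp only [hF, Set.indicator_apply, Set.mem_Iio]
      split <;> ring
    have hset : Iio x ∩ Ioc 0 1 = Ioo 0 x := by
      ext y
      simp only [mem_inter_iff, mem_Iio, mem_Ioc, mem_Ioo]
      constructor
      · rintro ⟨h1, h2, h3⟩; exact ⟨h2, h1⟩
      · rintro ⟨h1, h2⟩; exact ⟨h2, h1, le_trans h2.le hx.2⟩
    rw [hio, MeasureTheory.integral_indicator measurableSet_Iio,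
      Measure.restrict_restrict measurableSet_Iio, hset,
      ← integral_Ioc_eq_integral_Ioo, ← intervalIntegral.integral_of_le hx.1.le,
      intervalIntegral.integral_const_mul, aux_sub n hx.1]
  -- norm version of slice value
  have hval1n : ∀ x ∈ Ioc (0:ℝ) 1, (∫ y, ‖F (x, y)‖ ∂(volume.restrict (Ioc (0:ℝ) 1)))
      = x ^ n * (x ^ (n+1) * x ^ a * B) := by
    intro x hx
    rw [← hval1 x hx]
    apply MeasureTheory.integral_congr_ae
    filter_upwards [ae_restrict_mem measurableSet_Ioc] with y hy
    apply Real.norm_of_nonneg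
    simp only [hF]
    split
    · rename_i hlt
      exact mul_nonneg (mul_nonneg (pow_nonneg hx.1.le n) (pow_nonneg hy.1.le n))
        (Real.rpow_nonneg (by linarith) a)
    · exact le_rfl
  -- integrability of the majorant
  have hmaj : Integrable (fun x => x ^ n * (x ^ (n+1) * x ^ a * B))
      (volume.restrict (Ioc (0:ℝ) 1)) := by
    have h1 : IntervalIntegrable (fun x : ℝ => x ^ (((2*n+1 : ℕ) : ℝ) + a) * B) volume 0 1 :=
      (intervalIntegrable_rpow' (by push_cast; linarith)).mul_const B
    have h2 : IntegrableOn (fun x : ℝ => x ^ (((2*n+1 : ℕ) : ℝ) + a) * B) (Ioc 0 1) volume :=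
      (intervalIntegrable_iff_integrableOn_Ioc_of_le (by norm_num)).mp h1
    apply h2.congr
    filter_upwards [ae_restrict_mem measurableSet_Ioc] with x hx
    have hx0 : (0:ℝ) < x := hx.1
    rw [Real.rpow_add hx0, Real.rpow_natCast]
    rw [pow_add]
    ring
  -- integrability of F on the product
  have hmain : Integrable (fun x => ∫ y, ‖F (x, y)‖ ∂(volume.restrict (Ioc (0:ℝ) 1)))
      (volume.restrict (Ioc (0:ℝ) 1)) := by
    apply hmaj.congr
    filter_upwards [ae_restrict_mem measurableSet_Ioc] with x hx
    exact (hval1n x hx).symm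
  have hFint : Integrable F ((volume.restrict (Ioc (0:ℝ) 1)).prod
      (volume.restrict (Ioc (0:ℝ) 1))) := by
    rw [MeasureTheory.integrable_prod_iff hFm.aestronglyMeasurable]
    constructor
    · filter_upwards [ae_restrict_mem measurableSet_Ioc] with x hx using hslice1 x hx
    · exact hmain
  have hswap : Integrable (F ∘ Prod.swap) ((volume.restrict (Ioc (0:ℝ) 1)).prod
      (volume.restrict (Ioc (0:ℝ) 1))) := hFint.swap
  -- decompose the inner integral
  have hinner : ∀ x ∈ Ioc (0:ℝ) 1, (∫ y in (0:ℝ)..1, x ^ n * y ^ n * |x - y| ^ a)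
      = (∫ y, F (x, y) ∂(volume.restrict (Ioc (0:ℝ) 1)))
        + (∫ y, F (y, x) ∂(volume.restrict (Ioc (0:ℝ) 1))) := by
    intro x hx
    rw [intervalIntegral.integral_of_le (by norm_num : (0:ℝ) ≤ 1)]
    have hpt : ∀ y : ℝ, x ^ n * y ^ n * |x - y| ^ a = F (x, y) + F (y, x) := by
      intro y
      simp only [hF]
      rcases lt_trichotomy y x with h | h | h
      · rw [if_pos h, if_neg (not_lt.mpr h.le), add_zero, abs_of_pos (sub_pos.mpr h)]
      · subst h
        simp [sub_self, Real.zero_rpow (ne_of_lt ha0)]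
      · rw [if_neg (not_lt.mpr h.le), if_pos h, zero_add, abs_of_neg (by linarith), neg_sub]
        ring
    simp_rw [hpt]
    exact MeasureTheory.integral_add (hslice1 x hx) (hslice2 x hx)
  -- assemble
  have hd : (0:ℝ) < 2 * n + 2 + a := by
    have : (0:ℝ) ≤ n := Nat.cast_nonneg n
    linarith
  rw [intervalIntegral.integral_of_le (by norm_num : (0:ℝ) ≤ 1)]
  have e1 : (∫ x in Ioc (0:ℝ) 1, ∫ y in (0:ℝ)..1, x ^ n * y ^ n * |x - y| ^ a)
      = ∫ x in Ioc (0:ℝ) 1, ((∫ y in Ioc (0:ℝ) 1, F (x, y)) + (∫ y in Ioc (0:ℝ) 1, F (y, x))) :=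
    MeasureTheory.integral_congr_ae (by
      filter_upwards [ae_restrict_mem measurableSet_Ioc] with x hx using hinner x hx)
  have hswap' : Integrable (fun x => ∫ y in Ioc (0:ℝ) 1, F (y, x))
      (volume.restrict (Ioc (0:ℝ) 1)) := by exact hswap.integral_prod_left
  rw [e1, MeasureTheory.integral_add hFint.integral_prod_left hswap']
  have e2 : (∫ x in Ioc (0:ℝ) 1, ∫ y in Ioc (0:ℝ) 1, F (y, x))
      = ∫ x in Ioc (0:ℝ) 1, ∫ y in Ioc (0:ℝ) 1, F (x, y) :=
    MeasureTheory.integral_integral_swap (f := fun x y => F (y, x)) (by exact hswap)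
  have e3 : (∫ x in Ioc (0:ℝ) 1, ∫ y in Ioc (0:ℝ) 1, F (x, y)) = B * (1 / (2 * n + 2 + a)) := by
    have e4 : (∫ x in Ioc (0:ℝ) 1, ∫ y in Ioc (0:ℝ) 1, F (x, y))
        = ∫ x in Ioc (0:ℝ) 1, (x ^ (((2*n+1 : ℕ) : ℝ) + a) * B) := by
      apply MeasureTheory.integral_congr_ae
      filter_upwards [ae_restrict_mem measurableSet_Ioc] with x hx
      rw [hval1 x hx, Real.rpow_add hx.1, Real.rpow_natCast, pow_add]
      ring
    rw [e4, MeasureTheory.integral_mul_const,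
      ← intervalIntegral.integral_of_le (by norm_num : (0:ℝ) ≤ 1),
      integral_rpow (Or.inl (by push_cast; linarith))]
    rw [Real.one_rpow, Real.zero_rpow (by push_cast; linarith)]
    push_cast
    rw [sub_zero, show (2*(n:ℝ)+1+a+1) = 2*n+2+a by ring]
    field_simp
  rw [e2, e3]
  field_simp
  ring

/-- For `H ∈ (1/2, 1)`,
`n^(2H) ∫₀¹∫₀¹ xⁿ yⁿ |x−y|^(2H−2) dy dx → Γ(2H−1)` as `n → ∞`. -/
theorem limit_double_integral_fbm (H : ℝ) (hH : 1 / 2 < H) (hH1 : H < 1) :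
    Tendsto (fun n : ℕ =>
        (n : ℝ) ^ (2 * H) *
          ∫ x in (0:ℝ)..1, ∫ y in (0:ℝ)..1, x ^ n * y ^ n * |x - y| ^ (2 * H - 2))
      atTop (nhds (Real.Gamma (2 * H - 1))) := by
  have hs0 : (0:ℝ) < 2 * H - 1 := by linarith
  have hH0 : (0:ℝ) < H := by linarith
  have hgs : Real.Gamma (2 * H - 1) ≠ 0 := (Real.Gamma_pos_of_pos hs0).ne'
  have ha : (-1:ℝ) < 2 * H - 2 := by linarith
  have ha0 : 2 * H - 2 < 0 := by linarith
  have hmain : Tendsto (fun n : ℕ =>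
      ((n : ℝ) ^ (2 * H - 1) * n.factorial / Real.Gamma ((2 * H - 1) + n + 1))
        * (2 * n / (2 * n + 2 * H)) * Real.Gamma (2 * H - 1))
      atTop (nhds (Real.Gamma (2 * H - 1))) := by
    have := ((aux_lim hs0).mul (aux_ratio hH0)).mul_const (Real.Gamma (2 * H - 1))
    simpa using this
  apply hmain.congr'
  filter_upwards [eventually_ge_atTop 1] with n hn
  have hn0 : (0:ℝ) < n := by exact_mod_cast hn
  have hbeta : ∫ t in (0:ℝ)..1, t ^ n * (1 - t) ^ (2 * H - 2)
      = Real.Gamma (n + 1) * Real.Gamma (2 * H - 1) / Real.Gamma (n + 1 + (2 * H - 1)) := by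
    have := aux_beta hs0 n
    rw [show (2 * H - 1 - 1 : ℝ) = 2 * H - 2 by ring] at this
    exact this
  rw [aux_val ha ha0 n, hbeta]
  have hfac : Real.Gamma ((n:ℝ) + 1) = n.factorial := Real.Gamma_nat_eq_factorial n
  have hGc : Real.Gamma ((n:ℝ) + 1 + (2 * H - 1)) = Real.Gamma ((2 * H - 1) + n + 1) := by
    rw [show ((n:ℝ) + 1 + (2 * H - 1)) = (2 * H - 1) + n + 1 by ring]
  have hGpos : (0:ℝ) < Real.Gamma ((2 * H - 1) + n + 1) :=
    Real.Gamma_pos_of_pos (by positivity)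
  have hpow : (n:ℝ) ^ (2 * H) = (n:ℝ) ^ (2 * H - 1) * n := by
    have h := Real.rpow_add hn0 (2 * H - 1) 1
    rw [Real.rpow_one, show (2 * H - 1 + 1 : ℝ) = 2 * H by ring] at h
    exact h
  have hden : (2 * (n:ℝ) + 2 + (2 * H - 2)) = 2 * n + 2 * H := by ring
  have hdpos : (0:ℝ) < 2 * (n:ℝ) + 2 * H := by positivity
  rw [hfac, hGc, hpow, hden]
  field_simp
end

section
/- For H ∈ (0,1/2), any δ ∈ [0,1), and n ≥ 1, n^(2H) ∫₀^δ ( ∫_s^δ (tⁿ − sⁿ)(t−s)^(H−3/2) dt )² ds ≤ C n^(2H+2) δ^(2n−2) for a constant C depending only on H and δ, and hence this quantity converges to 0 as n → ∞. -/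
open Filter Real intervalIntegral

/-- Key algebraic estimate: `tⁿ − sⁿ ≤ n (t − s) δ^(n−1)` for `0 ≤ s ≤ t ≤ δ`. -/
lemma h7_pow_sub_pow_le {δ : ℝ} (hδ0 : 0 ≤ δ) (n : ℕ) {s t : ℝ}
    (hs : 0 ≤ s) (hst : s ≤ t) (htδ : t ≤ δ) :
    t ^ n - s ^ n ≤ (n : ℝ) * (t - s) * δ ^ (n - 1) := by
  rw [← geom_sum₂_mul t s n]
  have h2 : ∑ i ∈ Finset.range n, t ^ i * s ^ (n - 1 - i) ≤ (n : ℝ) * δ ^ (n - 1) := by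
    calc ∑ i ∈ Finset.range n, t ^ i * s ^ (n - 1 - i)
        ≤ ∑ _i ∈ Finset.range n, δ ^ (n - 1) := by
          refine Finset.sum_le_sum fun i hi => ?_
          have hi' : i + (n - 1 - i) = n - 1 := by
            have := Finset.mem_range.mp hi; omega
          calc t ^ i * s ^ (n - 1 - i) ≤ δ ^ i * δ ^ (n - 1 - i) :=
              mul_le_mul (pow_le_pow_left₀ (hs.trans hst) htδ i)
                (pow_le_pow_left₀ hs (hst.trans htδ) _)
                (pow_nonneg hs _) (pow_nonneg (hs.trans (hst.trans htδ)) i)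
            _ = δ ^ (n - 1) := by rw [← pow_add, hi']
      _ = (n : ℝ) * δ ^ (n - 1) := by
          rw [Finset.sum_const, Finset.card_range, nsmul_eq_mul]
  calc (∑ i ∈ Finset.range n, t ^ i * s ^ (n - 1 - i)) * (t - s)
      ≤ (n : ℝ) * δ ^ (n - 1) * (t - s) :=
        mul_le_mul_of_nonneg_right h2 (sub_nonneg.2 hst)
    _ = (n : ℝ) * (t - s) * δ ^ (n - 1) := by ring

/-- For `H ∈ (0,1/2)` and `δ ∈ [0,1)`, there is a constant `C` (depending only on `H`
and `δ`) such that for all `n ≥ 1`,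
`n^(2H) ∫₀^δ (∫_s^δ (tⁿ − sⁿ)(t−s)^(H−3/2) dt)² ds ≤ C n^(2H+2) δ^(2n−2)`,
and hence this quantity converges to `0` as `n → ∞`. -/
theorem h7_estimate (H : ℝ) (hH0 : 0 < H) (hH1 : H < 1 / 2)
    (δ : ℝ) (hδ0 : 0 ≤ δ) (hδ1 : δ < 1) :
    (∃ C : ℝ, ∀ n : ℕ, 1 ≤ n →
      (n : ℝ) ^ (2 * H) *
          ∫ s in (0:ℝ)..δ, (∫ t in s..δ, (t ^ n - s ^ n) * (t - s) ^ (H - 3 / 2)) ^ 2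
        ≤ C * (n : ℝ) ^ (2 * H + 2) * δ ^ (2 * n - 2)) ∧
    Tendsto (fun n : ℕ =>
        (n : ℝ) ^ (2 * H) *
          ∫ s in (0:ℝ)..δ, (∫ t in s..δ, (t ^ n - s ^ n) * (t - s) ^ (H - 3 / 2)) ^ 2)
      atTop (nhds 0) := by
  have hH2 : (0:ℝ) < H + 1 / 2 := by linarith
  set C : ℝ := δ ^ (2 * H + 2) / ((H + 1 / 2) ^ 2 * (2 * H + 2)) with hC
  have hC0 : 0 ≤ C := by
    apply div_nonneg (Real.rpow_nonneg hδ0 _)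
    positivity
  -- main inequality
  have main : ∀ n : ℕ, 1 ≤ n →
      (n : ℝ) ^ (2 * H) *
          ∫ s in (0:ℝ)..δ, (∫ t in s..δ, (t ^ n - s ^ n) * (t - s) ^ (H - 3 / 2)) ^ 2
        ≤ C * (n : ℝ) ^ (2 * H + 2) * δ ^ (2 * n - 2) := by
    intro n hn
    have hnpos : (0:ℝ) < n := by exact_mod_cast hn
    -- pointwise bound on the inner integrand
    have ptw : ∀ s : ℝ, 0 ≤ s → ∀ t ∈ Set.Icc s δ,
        0 ≤ (t ^ n - s ^ n) * (t - s) ^ (H - 3 / 2) ∧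
        (t ^ n - s ^ n) * (t - s) ^ (H - 3 / 2)
          ≤ (n : ℝ) * δ ^ (n - 1) * (t - s) ^ (H - 1 / 2) := by
      intro s hs0 t ht
      rcases eq_or_lt_of_le ht.1 with heq | hst
      · subst heq
        have h32 : H - 3 / 2 ≠ 0 := by intro h; linarith
        have h12 : H - 1 / 2 ≠ 0 := by intro h; linarith
        simp only [sub_self, Real.zero_rpow h32, Real.zero_rpow h12, mul_zero, zero_mul]
        exact ⟨le_rfl, le_rfl⟩
      · have hpos : 0 < t - s := sub_pos.2 hst
        constructor
        · exact mul_nonneg (sub_nonneg.2 (pow_le_pow_left₀ hs0 ht.1 n))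
            (Real.rpow_nonneg hpos.le _)
        · calc (t ^ n - s ^ n) * (t - s) ^ (H - 3 / 2)
              ≤ ((n : ℝ) * (t - s) * δ ^ (n - 1)) * (t - s) ^ (H - 3 / 2) :=
                mul_le_mul_of_nonneg_right
                  (h7_pow_sub_pow_le hδ0 n hs0 ht.1 ht.2)
                  (Real.rpow_nonneg hpos.le _)
            _ = (n : ℝ) * δ ^ (n - 1) * ((t - s) * (t - s) ^ (H - 3 / 2)) := by ring
            _ = (n : ℝ) * δ ^ (n - 1) * (t - s) ^ (H - 1 / 2) := by
                congr 1
                have e : H - 1 / 2 = 1 + (H - 3 / 2) := by ring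
                rw [e, Real.rpow_add hpos, Real.rpow_one]
    -- inner integral bounds
    have inner_nonneg : ∀ s ∈ Set.Icc (0:ℝ) δ,
        0 ≤ ∫ t in s..δ, (t ^ n - s ^ n) * (t - s) ^ (H - 3 / 2) := by
      intro s hs
      exact intervalIntegral.integral_nonneg hs.2 fun t ht => (ptw s hs.1 t ht).1
    have inner_le : ∀ s ∈ Set.Icc (0:ℝ) δ,
        (∫ t in s..δ, (t ^ n - s ^ n) * (t - s) ^ (H - 3 / 2))
          ≤ (n : ℝ) * δ ^ (n - 1) / (H + 1 / 2) * (δ - s) ^ (H + 1 / 2) := by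
      intro s hs
      have hds : 0 ≤ δ - s := by linarith [hs.2]
      have hB0 : 0 ≤ (n : ℝ) * δ ^ (n - 1) / (H + 1 / 2) * (δ - s) ^ (H + 1 / 2) := by
        apply mul_nonneg _ (Real.rpow_nonneg hds _)
        positivity
      by_cases hint : IntervalIntegrable
          (fun t => (t ^ n - s ^ n) * (t - s) ^ (H - 3 / 2)) MeasureTheory.volume s δ
      · have hmaj : IntervalIntegrable
            (fun t => (n : ℝ) * δ ^ (n - 1) * (t - s) ^ (H - 1 / 2))
            MeasureTheory.volume s δ := by
          have h0 : IntervalIntegrable (fun u : ℝ => u ^ (H - 1 / 2))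
              MeasureTheory.volume 0 (δ - s) :=
            intervalIntegral.intervalIntegrable_rpow' (by linarith)
          have h1 := (h0.comp_sub_right s).const_mul ((n : ℝ) * δ ^ (n - 1))
          simpa using h1
        have hmono := intervalIntegral.integral_mono_on hs.2 hint hmaj
          (fun t ht => (ptw s hs.1 t ht).2)
        refine hmono.trans_eq ?_
        rw [intervalIntegral.integral_const_mul]
        have h2 : (∫ t in s..δ, (t - s) ^ (H - 1 / 2))
            = ∫ u in s - s..δ - s, u ^ (H - 1 / 2) :=
          intervalIntegral.integral_comp_sub_right (fun u => u ^ (H - 1 / 2)) s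
        rw [h2, sub_self, integral_rpow (Or.inl (by linarith))]
        rw [Real.zero_rpow (by intro h; linarith : H - 1 / 2 + 1 ≠ 0)]
        have e : H - 1 / 2 + 1 = H + 1 / 2 := by ring
        rw [e, sub_zero]
        ring
      · rw [intervalIntegral.integral_undef hint]
        exact hB0
    -- square bound
    have sq_le : ∀ s ∈ Set.Icc (0:ℝ) δ,
        (∫ t in s..δ, (t ^ n - s ^ n) * (t - s) ^ (H - 3 / 2)) ^ 2
          ≤ ((n : ℝ) * δ ^ (n - 1) / (H + 1 / 2)) ^ 2 * (δ - s) ^ (2 * H + 1) := by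
      intro s hs
      have hds : 0 ≤ δ - s := by linarith [hs.2]
      have h1 : (∫ t in s..δ, (t ^ n - s ^ n) * (t - s) ^ (H - 3 / 2)) ^ 2
          ≤ ((n : ℝ) * δ ^ (n - 1) / (H + 1 / 2) * (δ - s) ^ (H + 1 / 2)) ^ 2 :=
        pow_le_pow_left₀ (inner_nonneg s hs) (inner_le s hs) 2
      refine h1.trans_eq ?_
      rw [mul_pow]
      congr 1
      rw [← Real.rpow_natCast ((δ - s) ^ (H + 1 / 2)) 2, ← Real.rpow_mul hds]
      congr 1
      push_cast; ring
    -- outer integral bound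
    have houter : (∫ s in (0:ℝ)..δ,
          (∫ t in s..δ, (t ^ n - s ^ n) * (t - s) ^ (H - 3 / 2)) ^ 2)
        ≤ ((n : ℝ) * δ ^ (n - 1) / (H + 1 / 2)) ^ 2 * (δ ^ (2 * H + 2) / (2 * H + 2)) := by
      have hRHS0 : 0 ≤ ((n : ℝ) * δ ^ (n - 1) / (H + 1 / 2)) ^ 2
          * (δ ^ (2 * H + 2) / (2 * H + 2)) := by
        apply mul_nonneg (sq_nonneg _)
        exact div_nonneg (Real.rpow_nonneg hδ0 _) (by linarith)
      by_cases hint2 : IntervalIntegrable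
          (fun s => (∫ t in s..δ, (t ^ n - s ^ n) * (t - s) ^ (H - 3 / 2)) ^ 2)
          MeasureTheory.volume 0 δ
      · have hmaj2 : IntervalIntegrable
            (fun s => ((n : ℝ) * δ ^ (n - 1) / (H + 1 / 2)) ^ 2 * (δ - s) ^ (2 * H + 1))
            MeasureTheory.volume 0 δ := by
          have h0 : IntervalIntegrable (fun u : ℝ => u ^ (2 * H + 1))
              MeasureTheory.volume 0 δ :=
            intervalIntegral.intervalIntegrable_rpow' (by linarith)
          have h1 := ((h0.comp_sub_left δ).symm).const_mul
            (((n : ℝ) * δ ^ (n - 1) / (H + 1 / 2)) ^ 2)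
          simpa using h1
        have hmono := intervalIntegral.integral_mono_on hδ0 hint2 hmaj2 sq_le
        refine hmono.trans_eq ?_
        rw [intervalIntegral.integral_const_mul]
        congr 1
        have h2 : (∫ s in (0:ℝ)..δ, (δ - s) ^ (2 * H + 1))
            = ∫ u in δ - δ..δ - 0, u ^ (2 * H + 1) :=
          intervalIntegral.integral_comp_sub_left (fun u => u ^ (2 * H + 1)) δ
        rw [h2, sub_self, sub_zero, integral_rpow (Or.inl (by linarith))]
        rw [Real.zero_rpow (by intro h; linarith : 2 * H + 1 + 1 ≠ 0)]
        have e : 2 * H + 1 + 1 = 2 * H + 2 := by ring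
        rw [e, sub_zero]
      · rw [intervalIntegral.integral_undef hint2]
        exact hRHS0
    -- assemble
    have e1 : (δ ^ (n - 1)) ^ 2 = δ ^ (2 * n - 2) := by
      rw [← pow_mul]
      congr 1
      omega
    have e2 : (n : ℝ) ^ (2 * H + 2) = (n : ℝ) ^ (2 * H) * (n : ℝ) ^ (2 : ℕ) := by
      rw [Real.rpow_add hnpos, show ((2:ℝ) = ((2:ℕ):ℝ)) by norm_num, Real.rpow_natCast]
    calc (n : ℝ) ^ (2 * H) *
          ∫ s in (0:ℝ)..δ, (∫ t in s..δ, (t ^ n - s ^ n) * (t - s) ^ (H - 3 / 2)) ^ 2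
        ≤ (n : ℝ) ^ (2 * H) *
            (((n : ℝ) * δ ^ (n - 1) / (H + 1 / 2)) ^ 2 * (δ ^ (2 * H + 2) / (2 * H + 2))) :=
          mul_le_mul_of_nonneg_left houter (Real.rpow_nonneg hnpos.le _)
      _ = C * (n : ℝ) ^ (2 * H + 2) * δ ^ (2 * n - 2) := by
          rw [hC, e2, div_pow, mul_pow, e1]
          have hne1 : (H + 1 / 2) ^ 2 ≠ 0 := by positivity
          have hne2 : (2 * H + 2) ≠ 0 := by positivity
          field_simp
  refine ⟨⟨C, main⟩, ?_⟩
  -- nonnegativity of the whole expression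
  have Fnonneg : ∀ n : ℕ, 0 ≤ (n : ℝ) ^ (2 * H) *
      ∫ s in (0:ℝ)..δ, (∫ t in s..δ, (t ^ n - s ^ n) * (t - s) ^ (H - 3 / 2)) ^ 2 := by
    intro n
    apply mul_nonneg (Real.rpow_nonneg (Nat.cast_nonneg n) _)
    exact intervalIntegral.integral_nonneg hδ0 fun s _ => sq_nonneg _
  -- the upper bound tends to 0
  have hr0 : (0:ℝ) ≤ δ ^ 2 := sq_nonneg δ
  have hr1 : δ ^ 2 < 1 := by nlinarith
  have hGten : Tendsto (fun n : ℕ => C * (n : ℝ) ^ (2 * H + 2) * δ ^ (2 * n - 2))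
      atTop (nhds 0) := by
    rw [← tendsto_add_atTop_iff_nat 1]
    have hg : Tendsto (fun n : ℕ => C * (((n : ℝ) + 1) ^ 3 * (δ ^ 2) ^ n))
        atTop (nhds 0) := by
      have h3 := tendsto_pow_const_mul_const_pow_of_lt_one 3 hr0 hr1
      have h2 := tendsto_pow_const_mul_const_pow_of_lt_one 2 hr0 hr1
      have h1 := tendsto_pow_const_mul_const_pow_of_lt_one 1 hr0 hr1
      have h0 := tendsto_pow_const_mul_const_pow_of_lt_one 0 hr0 hr1
      have hsum := ((h3.add (h2.const_mul (3:ℝ))).add (h1.const_mul (3:ℝ))).add h0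
      have hsum' := hsum.const_mul C
      simp only [add_zero, mul_zero] at hsum'
      refine hsum'.congr fun n => ?_
      ring
    refine squeeze_zero' (Eventually.of_forall fun n => ?_)
      (Eventually.of_forall fun n => ?_) hg
    · apply mul_nonneg (mul_nonneg hC0 (Real.rpow_nonneg (Nat.cast_nonneg _) _))
      exact pow_nonneg hδ0 _
    · have hrpow : ((n + 1 : ℕ) : ℝ) ^ (2 * H + 2) ≤ ((n : ℝ) + 1) ^ 3 := by
        push_cast
        calc ((n : ℝ) + 1) ^ (2 * H + 2) ≤ ((n : ℝ) + 1) ^ ((3:ℕ) : ℝ) :=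
            Real.rpow_le_rpow_of_exponent_le
              (by linarith [Nat.cast_nonneg (α := ℝ) n]) (by push_cast; linarith)
          _ = ((n : ℝ) + 1) ^ (3:ℕ) := Real.rpow_natCast _ 3
      have hδe : δ ^ (2 * (n + 1) - 2) = (δ ^ 2) ^ n := by
        rw [show 2 * (n + 1) - 2 = 2 * n by omega, pow_mul]
      rw [hδe]
      calc C * ((n + 1 : ℕ) : ℝ) ^ (2 * H + 2) * (δ ^ 2) ^ n
          ≤ C * ((n : ℝ) + 1) ^ 3 * (δ ^ 2) ^ n := by
            apply mul_le_mul_of_nonneg_right _ (pow_nonneg hr0 n)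
            exact mul_le_mul_of_nonneg_left hrpow hC0
        _ = C * (((n : ℝ) + 1) ^ 3 * (δ ^ 2) ^ n) := by ring
  refine squeeze_zero' (Eventually.of_forall Fnonneg) ?_ hGten
  filter_upwards [eventually_ge_atTop 1] with n hn using main n hn
end

section
/- For H ∈ (0,1), (n^(2H+2)/2) ∫₀¹∫₀¹ t^(n−1) u^(n−1) (t^(2H) + u^(2H) − |t−u|^(2H)) du dt = n^(2H+1)/(n+2H) − n^(2H+2) Γ(n) Γ(2H+1) / ((2n+2H) Γ(n+1+2H)). -/
open Filter Real intervalIntegral MeasureTheory Set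

lemma real_beta {a b : ℝ} (ha : 0 < a) (hb : 0 < b) :
    ∫ x in (0:ℝ)..1, x ^ (a - 1) * (1 - x) ^ (b - 1)
      = Real.Gamma a * Real.Gamma b / Real.Gamma (a + b) := by
  have key : Complex.betaIntegral (a : ℂ) (b : ℂ)
      = ((∫ x in (0:ℝ)..1, x ^ (a - 1) * (1 - x) ^ (b - 1) : ℝ) : ℂ) := by
    rw [Complex.betaIntegral, ← intervalIntegral.integral_ofReal,
      intervalIntegral.integral_of_le zero_le_one,
      intervalIntegral.integral_of_le zero_le_one]
    refine setIntegral_congr_fun measurableSet_Ioc fun x hx => ?_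
    have h1 : ((x ^ (a - 1) : ℝ) : ℂ) = (x : ℂ) ^ ((a : ℂ) - 1) := by
      rw [Complex.ofReal_cpow hx.1.le]; push_cast; ring_nf
    have h2 : (((1 - x) ^ (b - 1) : ℝ) : ℂ) = (1 - (x : ℂ)) ^ ((b : ℂ) - 1) := by
      rw [Complex.ofReal_cpow (by linarith [hx.2] : (0:ℝ) ≤ 1 - x)]; push_cast; ring_nf
    push_cast
    rw [← h1, ← h2]
  have h := Complex.Gamma_mul_Gamma_eq_betaIntegral
    (s := (a : ℂ)) (t := (b : ℂ)) (by simpa using ha) (by simpa using hb)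
  rw [key, ← Complex.ofReal_add, Complex.Gamma_ofReal, Complex.Gamma_ofReal,
    Complex.Gamma_ofReal, ← Complex.ofReal_mul, ← Complex.ofReal_mul] at h
  have h' : Real.Gamma a * Real.Gamma b
      = Real.Gamma (a + b) * ∫ x in (0:ℝ)..1, x ^ (a - 1) * (1 - x) ^ (b - 1) :=
    Complex.ofReal_injective h
  have hG : Real.Gamma (a + b) ≠ 0 := (Real.Gamma_pos_of_pos (by linarith)).ne'
  field_simp [hG] at h' ⊢
  linarith [h']

lemma integral_pow_mul_rpow (m : ℕ) {p : ℝ} (hp : 0 < p) {t : ℝ} (ht : 0 ≤ t) :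
    ∫ u in (0:ℝ)..t, u ^ m * u ^ p = t ^ (m + 1) * t ^ p / ((m : ℝ) + p + 1) := by
  have hmp : (0:ℝ) < (m : ℝ) + p := by positivity
  have h1 : ∫ u in (0:ℝ)..t, u ^ m * u ^ p = ∫ u in (0:ℝ)..t, u ^ ((m : ℝ) + p) := by
    refine intervalIntegral.integral_congr fun u hu => ?_
    rw [uIcc_of_le ht] at hu
    rcases eq_or_lt_of_le hu.1 with rfl | hu0
    · rw [Real.zero_rpow hp.ne', Real.zero_rpow hmp.ne', mul_zero]
    · rw [← Real.rpow_natCast u m, ← Real.rpow_add hu0]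
  rw [h1, integral_rpow (Or.inl (by linarith))]
  rw [Real.zero_rpow (by linarith : (m : ℝ) + p + 1 ≠ 0), sub_zero]
  rcases eq_or_lt_of_le ht with rfl | ht0
  · rw [Real.zero_rpow (by linarith : (m : ℝ) + p + 1 ≠ 0), zero_pow (Nat.succ_ne_zero m),
      zero_mul]
  · rw [show (m : ℝ) + p + 1 = ((m + 1 : ℕ) : ℝ) + p by push_cast; ring,
      Real.rpow_add ht0, Real.rpow_natCast]

lemma inner_triangle (m : ℕ) {p t : ℝ} (hp : 0 < p) (ht : 0 < t) :
    ∫ u in (0:ℝ)..t, u ^ m * (t - u) ^ p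
      = t ^ (m + 1) * t ^ p * ∫ s in (0:ℝ)..1, s ^ m * (1 - s) ^ p := by
  have h := intervalIntegral.integral_comp_mul_left (a := (0:ℝ)) (b := 1)
      (fun u => u ^ m * (t - u) ^ p) ht.ne'
  simp only [mul_zero, mul_one, smul_eq_mul] at h
  have h2 : ∫ x in (0:ℝ)..1, (t * x) ^ m * (t - t * x) ^ p
      = t ^ m * t ^ p * ∫ s in (0:ℝ)..1, s ^ m * (1 - s) ^ p := by
    rw [← intervalIntegral.integral_const_mul]
    refine intervalIntegral.integral_congr fun s hs => ?_
    rw [uIcc_of_le zero_le_one] at hs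
    rw [show t - t * s = t * (1 - s) by ring,
      Real.mul_rpow ht.le (by linarith [hs.2] : (0:ℝ) ≤ 1 - s), mul_pow]
    ring
  rw [h2] at h
  have := congrArg (fun x => t * x) h
  simp only [← mul_assoc, mul_inv_cancel₀ ht.ne', one_mul] at this
  rw [← this, pow_succ]; ring

lemma square_eq_two_triangle (g : ℝ × ℝ → ℝ) (hc : Continuous g)
    (hsymm : ∀ t u : ℝ, g (t, u) = g (u, t)) :
    (∫ t in (0:ℝ)..1, ∫ u in (0:ℝ)..1, g (t, u))
      = 2 * ∫ t in (0:ℝ)..1, ∫ u in (0:ℝ)..t, g (t, u) := by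
  set Q : Set (ℝ × ℝ) := Ioc (0:ℝ) 1 ×ˢ Ioc (0:ℝ) 1 with hQdef
  set S₁ : Set (ℝ × ℝ) := {z | 0 < z.2 ∧ z.2 ≤ z.1 ∧ z.1 ≤ 1} with hS₁def
  set S₂ : Set (ℝ × ℝ) := {z | 0 < z.1 ∧ z.1 < z.2 ∧ z.2 ≤ 1} with hS₂def
  set S₃ : Set (ℝ × ℝ) := {z | 0 < z.2 ∧ z.2 < z.1 ∧ z.1 ≤ 1} with hS₃def
  have hS₁m : MeasurableSet S₁ := by
    have : S₁ = {z : ℝ × ℝ | 0 < z.2} ∩ ({z | z.2 ≤ z.1} ∩ {z | z.1 ≤ 1}) := by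
      ext z; simp [hS₁def, and_assoc]
    rw [this]
    exact (measurableSet_lt measurable_const measurable_snd).inter
      ((measurableSet_le measurable_snd measurable_fst).inter
        (measurableSet_le measurable_fst measurable_const))
  have hS₂m : MeasurableSet S₂ := by
    have : S₂ = {z : ℝ × ℝ | 0 < z.1} ∩ ({z | z.1 < z.2} ∩ {z | z.2 ≤ 1}) := by
      ext z; simp [hS₂def, and_assoc]
    rw [this]
    exact (measurableSet_lt measurable_const measurable_fst).inter
      ((measurableSet_lt measurable_fst measurable_snd).inter
        (measurableSet_le measurable_snd measurable_const))
  have hS₃m : MeasurableSet S₃ := by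
    have : S₃ = {z : ℝ × ℝ | 0 < z.2} ∩ ({z | z.2 < z.1} ∩ {z | z.1 ≤ 1}) := by
      ext z; simp [hS₃def, and_assoc]
    rw [this]
    exact (measurableSet_lt measurable_const measurable_snd).inter
      ((measurableSet_lt measurable_snd measurable_fst).inter
        (measurableSet_le measurable_fst measurable_const))
  have hcover : Q = S₁ ∪ S₂ := by
    ext ⟨t, u⟩
    simp only [hQdef, hS₁def, hS₂def, mem_prod, mem_Ioc, mem_union, mem_setOf_eq]
    constructor
    · rintro ⟨⟨ht0, ht1⟩, hu0, hu1⟩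
      rcases le_or_gt u t with h | h
      · exact Or.inl ⟨hu0, h, ht1⟩
      · exact Or.inr ⟨ht0, h, hu1⟩
    · rintro (⟨hu0, hut, ht1⟩ | ⟨ht0, htu, hu1⟩)
      · exact ⟨⟨lt_of_lt_of_le hu0 hut, ht1⟩, hu0, le_trans hut ht1⟩
      · exact ⟨⟨ht0, le_trans htu.le hu1⟩, lt_trans ht0 htu, hu1⟩
  have hdisj : Disjoint S₁ S₂ := by
    rw [Set.disjoint_left]
    rintro ⟨t, u⟩ ⟨_, hut, _⟩ ⟨_, htu, _⟩
    exact absurd (lt_of_le_of_lt hut htu) (lt_irrefl _)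
  have hQint : IntegrableOn g Q (volume.prod volume) := by
    rw [← Measure.volume_eq_prod]
    refine ((hc.continuousOn).integrableOn_compact
      ((isCompact_Icc : IsCompact (Icc (0:ℝ) 1)).prod
        (isCompact_Icc : IsCompact (Icc (0:ℝ) 1)))).mono_set ?_
    exact Set.prod_mono Ioc_subset_Icc_self Ioc_subset_Icc_self
  have hS₁sub : S₁ ⊆ Q := hcover ▸ Set.subset_union_left
  have hS₂sub : S₂ ⊆ Q := hcover ▸ Set.subset_union_right
  -- the square as a set integral
  have hsq : (∫ t in (0:ℝ)..1, ∫ u in (0:ℝ)..1, g (t, u))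
      = ∫ z in Q, g z ∂(volume.prod volume) := by
    rw [setIntegral_prod g hQint, intervalIntegral.integral_of_le zero_le_one]
    refine setIntegral_congr_fun measurableSet_Ioc fun t _ => ?_
    rw [intervalIntegral.integral_of_le zero_le_one]
  -- split into the two triangles
  have hsplit : ∫ z in Q, g z ∂(volume.prod volume)
      = (∫ z in S₁, g z ∂(volume.prod volume)) + ∫ z in S₂, g z ∂(volume.prod volume) := by
    rw [hcover]
    exact setIntegral_union hdisj hS₂m (hQint.mono_set hS₁sub) (hQint.mono_set hS₂sub)
  -- swap the second triangle
  have hswap : ∫ z in S₂, g z ∂(volume.prod volume)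
      = ∫ z in S₃, g z ∂(volume.prod volume) := by
    rw [← MeasureTheory.integral_indicator hS₂m, ← MeasureTheory.integral_indicator hS₃m]
    rw [← MeasureTheory.integral_prod_swap (S₂.indicator g)]
    congr 1
    funext z
    have hmem : z.swap ∈ S₂ ↔ z ∈ S₃ := by
      simp [hS₂def, hS₃def, Prod.swap]
    by_cases h : z ∈ S₃
    · rw [Set.indicator_of_mem (hmem.mpr h), Set.indicator_of_mem h]
      rw [show z.swap = (z.2, z.1) from rfl, hsymm z.2 z.1]
    · rw [Set.indicator_of_notMem (fun hh => h (hmem.mp hh)), Set.indicator_of_notMem h]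
  -- each triangle as an iterated integral
  have tri₁ : ∫ z in S₁, g z ∂(volume.prod volume)
      = ∫ t in (0:ℝ)..1, ∫ u in (0:ℝ)..t, g (t, u) := by
    have e1 : ∫ z in S₁, g z ∂(volume.prod volume)
        = ∫ z in Q, S₁.indicator g z ∂(volume.prod volume) := by
      rw [setIntegral_indicator hS₁m, Set.inter_eq_right.mpr hS₁sub]
    rw [e1, setIntegral_prod _ (hQint.indicator hS₁m),
      intervalIntegral.integral_of_le zero_le_one]
    refine setIntegral_congr_fun measurableSet_Ioc fun t ht => ?_
    have e2 : (fun u => S₁.indicator g (t, u)) = (Ioc 0 t).indicator (fun u => g (t, u)) := by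
      funext u
      by_cases h : u ∈ Ioc 0 t
      · rw [Set.indicator_of_mem (show (t, u) ∈ S₁ from ⟨h.1, h.2, ht.2⟩),
          Set.indicator_of_mem h]
      · rw [Set.indicator_of_notMem (show (t, u) ∉ S₁ from fun hh => h ⟨hh.1, hh.2.1⟩),
          Set.indicator_of_notMem h]
    have hint : Ioc (0:ℝ) 1 ∩ Ioc 0 t = Ioc 0 t :=
      Set.inter_eq_right.mpr (fun u hu => ⟨hu.1, hu.2.trans ht.2⟩)
    rw [e2, setIntegral_indicator measurableSet_Ioc, hint,
      intervalIntegral.integral_of_le ht.1.le]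
  have tri₃ : ∫ z in S₃, g z ∂(volume.prod volume)
      = ∫ t in (0:ℝ)..1, ∫ u in (0:ℝ)..t, g (t, u) := by
    have hS₃sub : S₃ ⊆ S₁ := fun z hz => ⟨hz.1, hz.2.1.le, hz.2.2⟩
    have e1 : ∫ z in S₃, g z ∂(volume.prod volume)
        = ∫ z in Q, S₃.indicator g z ∂(volume.prod volume) := by
      rw [setIntegral_indicator hS₃m, Set.inter_eq_right.mpr (hS₃sub.trans hS₁sub)]
    rw [e1, setIntegral_prod _ (hQint.indicator hS₃m),
      intervalIntegral.integral_of_le zero_le_one]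
    refine setIntegral_congr_fun measurableSet_Ioc fun t ht => ?_
    have e2 : (fun u => S₃.indicator g (t, u)) = (Ioo 0 t).indicator (fun u => g (t, u)) := by
      funext u
      by_cases h : u ∈ Ioo 0 t
      · rw [Set.indicator_of_mem (show (t, u) ∈ S₃ from ⟨h.1, h.2, ht.2⟩),
          Set.indicator_of_mem h]
      · rw [Set.indicator_of_notMem (show (t, u) ∉ S₃ from fun hh => h ⟨hh.1, hh.2.1⟩),
          Set.indicator_of_notMem h]
    have hint : Ioc (0:ℝ) 1 ∩ Ioo 0 t = Ioo 0 t :=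
      Set.inter_eq_right.mpr (fun u hu => ⟨hu.1, hu.2.le.trans ht.2⟩)
    rw [e2, setIntegral_indicator measurableSet_Ioo, hint,
      intervalIntegral.integral_of_le ht.1.le, integral_Ioc_eq_integral_Ioo]
  rw [hsq, hsplit, hswap, tri₁, tri₃]
  ring

/-- For `H ∈ (0,1)` and `n ≥ 1`,
`(n^(2H+2)/2) ∫₀¹∫₀¹ t^(n−1) u^(n−1) (t^(2H) + u^(2H) − |t−u|^(2H)) du dt
  = n^(2H+1)/(n+2H) − n^(2H+2) Γ(n) Γ(2H+1) / ((2n+2H) Γ(n+1+2H))`. -/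
theorem double_integral_covariance (H : ℝ) (hH0 : 0 < H) (hH1 : H < 1)
    (n : ℕ) (hn : 1 ≤ n) :
    (n : ℝ) ^ (2 * H + 2) / 2 *
        ∫ t in (0:ℝ)..1, ∫ u in (0:ℝ)..1,
          t ^ (n - 1) * u ^ (n - 1) * (t ^ (2 * H) + u ^ (2 * H) - |t - u| ^ (2 * H))
      = (n : ℝ) ^ (2 * H + 1) / ((n : ℝ) + 2 * H)
        - (n : ℝ) ^ (2 * H + 2) * Real.Gamma n * Real.Gamma (2 * H + 1)
            / ((2 * (n : ℝ) + 2 * H) * Real.Gamma ((n : ℝ) + 1 + 2 * H)) := by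
  have hp : 0 < 2 * H := by linarith
  set p := 2 * H with hpdef
  set a : ℕ := n - 1 with hadef
  have hcast : ((a : ℝ)) = (n : ℝ) - 1 := by
    rw [hadef, Nat.cast_sub hn, Nat.cast_one]
  have hn0 : (0 : ℝ) < n := by exact_mod_cast Nat.lt_of_lt_of_le Nat.zero_lt_one hn
  have hrp : Continuous fun x : ℝ => x ^ p := Real.continuous_rpow_const hp.le
  set B := ∫ s in (0:ℝ)..1, s ^ a * (1 - s) ^ p with hBdef
  have hBval : B = Real.Gamma n * Real.Gamma (p + 1) / Real.Gamma ((n : ℝ) + 1 + p) := by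
    have h := real_beta (a := (n : ℝ)) (b := p + 1) hn0 (by linarith)
    rw [show (n : ℝ) + (p + 1) = (n : ℝ) + 1 + p by ring] at h
    rw [hBdef, ← h]
    refine intervalIntegral.integral_congr fun s hs => ?_
    rw [add_sub_cancel_right, ← hcast, Real.rpow_natCast]
  set g : ℝ × ℝ → ℝ :=
    fun z => z.1 ^ a * z.2 ^ a * (z.1 ^ p + z.2 ^ p - |z.1 - z.2| ^ p) with hgdef
  have hgc : Continuous g :=
    ((continuous_fst.pow a).mul (continuous_snd.pow a)).mul
      (((hrp.comp continuous_fst).add (hrp.comp continuous_snd)).sub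
        (hrp.comp (continuous_fst.sub continuous_snd).abs))
  have hgsymm : ∀ t u : ℝ, g (t, u) = g (u, t) := by
    intro t u
    simp only [hgdef]
    rw [abs_sub_comm]
    ring
  have key := square_eq_two_triangle g hgc hgsymm
  set C : ℝ := 1 / ((a : ℝ) + 1) + 1 / ((a : ℝ) + p + 1) - B with hCdef
  have inner_eval : ∀ t ∈ Set.Ioc (0:ℝ) 1,
      (∫ u in (0:ℝ)..t, g (t, u)) = C * (t ^ (a + (a + 1)) * t ^ p) := by
    intro t ht
    have ht0 := ht.1
    have e1 : (∫ u in (0:ℝ)..t, g (t, u))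
        = ∫ u in (0:ℝ)..t,
            ((t ^ a * t ^ p) * u ^ a + t ^ a * (u ^ a * u ^ p))
              - t ^ a * (u ^ a * (t - u) ^ p) := by
      refine intervalIntegral.integral_congr fun u hu => ?_
      rw [uIcc_of_le ht0.le] at hu
      simp only [hgdef]
      rw [abs_of_nonneg (sub_nonneg.mpr hu.2)]
      ring
    have i1 : IntervalIntegrable (fun u : ℝ => (t ^ a * t ^ p) * u ^ a) volume 0 t :=
      (continuous_const.mul (continuous_pow a)).intervalIntegrable 0 t
    have i2 : IntervalIntegrable (fun u : ℝ => t ^ a * (u ^ a * u ^ p)) volume 0 t :=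
      (continuous_const.mul ((continuous_pow a).mul hrp)).intervalIntegrable 0 t
    have i3 : IntervalIntegrable (fun u : ℝ => t ^ a * (u ^ a * (t - u) ^ p)) volume 0 t :=
      (continuous_const.mul ((continuous_pow a).mul
        (hrp.comp (continuous_const.sub continuous_id)))).intervalIntegrable 0 t
    rw [e1, intervalIntegral.integral_sub (i1.add i2) i3,
      intervalIntegral.integral_add i1 i2,
      intervalIntegral.integral_const_mul, intervalIntegral.integral_const_mul,
      intervalIntegral.integral_const_mul,
      integral_pow, inner_triangle a hp ht0, integral_pow_mul_rpow a hp ht0.le]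
    rw [zero_pow (Nat.succ_ne_zero a), sub_zero, hCdef]
    have hden1 : ((a : ℝ) + 1) ≠ 0 := by positivity
    have hden2 : ((a : ℝ) + p + 1) ≠ 0 := by positivity
    field_simp
    push_cast
    ring
  have outer : (∫ t in (0:ℝ)..1, ∫ u in (0:ℝ)..t, g (t, u))
      = C * (1 ^ (a + (a + 1) + 1) * 1 ^ p / (((a + (a + 1) : ℕ) : ℝ) + p + 1)) := by
    rw [← integral_pow_mul_rpow (a + (a + 1)) hp zero_le_one,
      ← intervalIntegral.integral_const_mul]
    refine intervalIntegral.integral_congr fun t htm => ?_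
    rw [uIcc_of_le zero_le_one] at htm
    rcases eq_or_lt_of_le htm.1 with rfl | ht0
    · rw [intervalIntegral.integral_same, zero_pow (by omega : a + (a + 1) ≠ 0),
        zero_mul, mul_zero]
    · exact inner_eval t ⟨ht0, htm.2⟩
  simp only [hgdef] at key
  rw [key, outer, one_pow, Real.one_rpow, mul_one]
  push_cast
  rw [hCdef, hBval, hcast]
  have hnp : (0:ℝ) < (n : ℝ) + p := by positivity
  have h2np : (0:ℝ) < 2 * (n : ℝ) + p := by positivity
  have hG3 : (0:ℝ) < Real.Gamma ((n : ℝ) + 1 + p) := Real.Gamma_pos_of_pos (by positivity)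
  have hXp : (n : ℝ) ^ (p + 2) = (n : ℝ) ^ (p + 1) * n := by
    rw [show p + 2 = p + 1 + 1 by ring, Real.rpow_add_one hn0.ne']
  rw [hXp,
    show (n : ℝ) - 1 + 1 = (n : ℝ) by ring,
    show (n : ℝ) - 1 + p + 1 = (n : ℝ) + p by ring,
    show (n : ℝ) - 1 + (n : ℝ) + p + 1 = 2 * (n : ℝ) + p by ring]
  field_simp
  ring
end
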